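/- Let Ω ⊆ ℍ² be a nonempty bounded open set (its closure compact in ℍ²). Then there exists ε₀ > 0 such that for every nonempty set D ⊆ ∂Ω of hyperbolic diameter less than ε₀, there exists a Lipschitz function w : ℍ² → ℝ that vanishes on an open neighborhood of D, with 0 < ∫_Ω w² dA < ∞ and ∫_Ω |∇w|² dx dy < (1/4) ∫_Ω w² dA. In other words, the first mixed (Dirichlet on D, Neumann elsewhere) eigenvalue of Ω is strictly less than 1/4 whenever the Dirichlet region D has sufficiently small diameter. -/

import Mathlib

open MeasureTheory Filter Set Topology

noncomputable section

/-- The upper half-plane model of the hyperbolic plane. -/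
def H2 : Set (ℝ × ℝ) := {p | 0 < p.2}

/-- Inverse hyperbolic cosine. -/
def arcosh (t : ℝ) : ℝ := Real.log (t + Real.sqrt (t ^ 2 - 1))

/-- Hyperbolic distance in the upper half-plane model. -/
def hypDist (a b : ℝ × ℝ) : ℝ :=
  arcosh (1 + ((a.1 - b.1) ^ 2 + (a.2 - b.2) ^ 2) / (2 * a.2 * b.2))

/-- Partial derivative in the `x` direction. -/
def pdx (u : ℝ × ℝ → ℝ) (p : ℝ × ℝ) : ℝ := fderiv ℝ u p (1, 0)

/-- Partial derivative in the `y` direction. -/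
def pdy (u : ℝ × ℝ → ℝ) (p : ℝ × ℝ) : ℝ := fderiv ℝ u p (0, 1)

/-- Squared Euclidean norm of the gradient. -/
def gradSq (u : ℝ × ℝ → ℝ) (p : ℝ × ℝ) : ℝ := pdx u p ^ 2 + pdy u p ^ 2

/-- The hyperbolic Laplacian `Δu = y²(u_xx + u_yy)`. -/
def hypLap (u : ℝ × ℝ → ℝ) (p : ℝ × ℝ) : ℝ :=
  p.2 ^ 2 * (pdx (pdx u) p + pdy (pdy u) p)

/-- Geodesic convexity in the hyperbolic metric. -/
def GeodesicallyConvex (Ω : Set (ℝ × ℝ)) : Prop :=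
  ∀ a ∈ Ω, ∀ b ∈ Ω, ∀ c ∈ H2, hypDist a c + hypDist c b = hypDist a b → c ∈ Ω

/-- `ν` is a Euclidean unit vector, the boundary of `Ω` has a tangent line at `q`
(the line through `q` orthogonal to `ν`), and `ν` points outward from `Ω`. -/
def IsOutwardNormalAt (Ω : Set (ℝ × ℝ)) (q ν : ℝ × ℝ) : Prop :=
  ν.1 ^ 2 + ν.2 ^ 2 = 1 ∧
  Tendsto (fun x : ℝ × ℝ =>
      |(x.1 - q.1) * ν.1 + (x.2 - q.2) * ν.2| /
        Real.sqrt ((x.1 - q.1) ^ 2 + (x.2 - q.2) ^ 2))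
    (𝓝[frontier Ω \ {q}] q) (𝓝 0) ∧
  ∀ᶠ t in 𝓝[>] (0 : ℝ), q + t • ν ∉ Ω


section AuxLemmas

lemma abs_log_sub_log_le {β x y : ℝ} (hβ : 0 < β) (hx : β ≤ x) (hy : β ≤ y) :
    |Real.log x - Real.log y| ≤ |x - y| / β := by
  wlog h : y ≤ x generalizing x y
  · rw [abs_sub_comm, abs_sub_comm x y]; exact this hy hx (le_of_not_ge h)
  have hy0 : 0 < y := hβ.trans_le hy
  have hx0 : 0 < x := hβ.trans_le hx
  have h1 : Real.log x - Real.log y ≤ (x - y) / β := by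
    rw [← Real.log_div hx0.ne' hy0.ne']
    calc Real.log (x / y) ≤ x / y - 1 := Real.log_le_sub_one_of_pos (by positivity)
      _ = (x - y) / y := by field_simp
      _ ≤ (x - y) / β := by
          apply div_le_div_of_nonneg_left (by linarith) hβ hy
  rw [abs_of_nonneg (sub_nonneg.2 ((Real.log_le_log_iff hy0 hx0).2 h)),
    abs_of_nonneg (sub_nonneg.2 h)]
  exact h1

lemma abs_min_sub_min_le' (c a b : ℝ) : |min c a - min c b| ≤ |a - b| := by
  rcases le_total a b with h | h <;> rcases le_total c a with h1 | h1 <;>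
    rcases le_total c b with h2 | h2 <;>
    simp [min_eq_left, min_eq_right, h1, h2, abs_le] <;> constructor <;>
    cases abs_cases (a - b) <;> linarith

lemma abs_max_sub_max_le' (a b r : ℝ) : |max a r - max b r| ≤ |a - b| := by
  rcases le_total a b with h | h <;> rcases le_total a r with h1 | h1 <;>
    rcases le_total b r with h2 | h2 <;>
    simp [max_eq_left, max_eq_right, h1, h2, abs_le] <;> constructor <;>
    cases abs_cases (a - b) <;> linarith

/-- logarithmic cutoff profile -/
def cutoff (r L t : ℝ) : ℝ := min 1 ((Real.log (max t r) - Real.log r) / L)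

lemma cutoff_nonneg {r L : ℝ} (hr : 0 < r) (hL : 0 < L) (t : ℝ) : 0 ≤ cutoff r L t := by
  have h : Real.log r ≤ Real.log (max t r) :=
    Real.log_le_log hr (le_max_right t r)
  unfold cutoff
  have : 0 ≤ (Real.log (max t r) - Real.log r) / L := div_nonneg (by linarith) hL.le
  simp [le_min_iff, this]

lemma cutoff_le_one (r L t : ℝ) : cutoff r L t ≤ 1 := min_le_left _ _

lemma cutoff_zero {r L t : ℝ} (ht : t ≤ r) : cutoff r L t = 0 := by
  unfold cutoff
  rw [max_eq_right ht]
  simp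

lemma cutoff_one {r L R t : ℝ} (hr : 0 < r) (hL : 0 < L) (hrR : r ≤ R)
    (hRL : Real.log R - Real.log r = L) (ht : R ≤ t) : cutoff r L t = 1 := by
  have hR : 0 < R := hr.trans_le hrR
  have hmax : max t r = t := max_eq_left (hrR.trans ht)
  have h1 : Real.log R ≤ Real.log t := Real.log_le_log hR ht
  have : (1 : ℝ) ≤ (Real.log (max t r) - Real.log r) / L := by
    rw [hmax, le_div_iff₀ hL, one_mul, ← hRL]; linarith
  unfold cutoff
  exact min_eq_left this

lemma cutoff_lip {r L β s t : ℝ} (hβ : 0 < β) (hL : 0 < L)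
    (hs : β ≤ max s r) (ht : β ≤ max t r) :
    |cutoff r L s - cutoff r L t| ≤ |s - t| / (β * L) := by
  unfold cutoff
  calc |min 1 ((Real.log (max s r) - Real.log r) / L) -
        min 1 ((Real.log (max t r) - Real.log r) / L)|
      ≤ |(Real.log (max s r) - Real.log r) / L -
          (Real.log (max t r) - Real.log r) / L| := abs_min_sub_min_le' _ _ _
    _ = |Real.log (max s r) - Real.log (max t r)| / L := by
        rw [div_sub_div_same, abs_div, abs_of_pos hL]
        congr 2
        ring
    _ ≤ (|max s r - max t r| / β) / L := by
        gcongr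
        exact abs_log_sub_log_le hβ hs ht
    _ ≤ (|s - t| / β) / L := by
        have h1 : |max s r - max t r| / β ≤ |s - t| / β :=
          div_le_div_of_nonneg_right (abs_max_sub_max_le' s t r) hβ.le
        exact div_le_div_of_nonneg_right h1 hL.le
    _ = |s - t| / (β * L) := by rw [div_div]

lemma gradSq_nonneg (u : ℝ × ℝ → ℝ) (p : ℝ × ℝ) : 0 ≤ gradSq u p := by
  unfold gradSq; positivity

lemma gradSq_le_of_lipschitzOn {w : ℝ × ℝ → ℝ} {p : ℝ × ℝ} {K : NNReal} {s : Set (ℝ × ℝ)}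
    (hs : s ∈ 𝓝 p) (h : LipschitzOnWith K w s) : gradSq w p ≤ 2 * (K : ℝ) ^ 2 := by
  have h1 : ‖fderiv ℝ w p‖ ≤ (K : ℝ) := norm_fderiv_le_of_lipschitzOn ℝ hs h
  have e1 : |pdx w p| ≤ ‖fderiv ℝ w p‖ := by
    have := (fderiv ℝ w p).le_opNorm (1, 0)
    have hn : ‖((1 : ℝ), (0 : ℝ))‖ = 1 := by
      rw [Prod.norm_def]; simp
    rw [hn, mul_one] at this
    simpa [pdx, Real.norm_eq_abs] using this
  have e2 : |pdy w p| ≤ ‖fderiv ℝ w p‖ := by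
    have := (fderiv ℝ w p).le_opNorm (0, 1)
    have hn : ‖((0 : ℝ), (1 : ℝ))‖ = 1 := by
      rw [Prod.norm_def]; simp
    rw [hn, mul_one] at this
    simpa [pdy, Real.norm_eq_abs] using this
  have h2 : |pdx w p| ≤ (K : ℝ) := e1.trans h1
  have h3 : |pdy w p| ≤ (K : ℝ) := e2.trans h1
  unfold gradSq
  nlinarith [abs_nonneg (pdx w p), abs_nonneg (pdy w p), sq_abs (pdx w p), sq_abs (pdy w p)]

lemma gradSq_eq_zero_of_eventually_const {w : ℝ × ℝ → ℝ} {p : ℝ × ℝ} {c : ℝ}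
    (h : ∀ᶠ x in 𝓝 p, w x = c) : gradSq w p = 0 := by
  have he : w =ᶠ[𝓝 p] fun _ => c := h
  have : fderiv ℝ w p = fderiv ℝ (fun _ => c) p := he.fderiv_eq
  rw [fderiv_fun_const] at this
  unfold gradSq pdx pdy
  rw [this]
  simp

lemma exists_dyadic : ∀ N : ℕ, 1 ≤ N → ∀ x : ℝ, 1 ≤ x → x ≤ 2 ^ N →
    ∃ k, k < N ∧ (2 : ℝ) ^ k ≤ x ∧ x ≤ 2 ^ (k + 1) := by
  intro N
  induction N with
  | zero => intro h; omega
  | succ n ih =>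
    intro _ x hx1 hx2
    by_cases h : x ≤ 2 ^ n
    · rcases Nat.eq_zero_or_pos n with hn | hn
      · subst hn
        exact ⟨0, Nat.zero_lt_one, by simpa using hx1, by simpa using hx2⟩
      · obtain ⟨k, hk, h1, h2⟩ := ih hn x hx1 h
        exact ⟨k, Nat.lt_succ_of_lt hk, h1, h2⟩
    · exact ⟨n, Nat.lt_succ_self n, le_of_not_ge h, hx2⟩

end AuxLemmas

set_option maxHeartbeats 2000000 in

/-- **Lemma (small Dirichlet region forces small first mixed eigenvalue).** For every
nonempty bounded open `Ω ⊆ ℍ²` there is `ε₀ > 0` such that for every nonempty `D ⊆ ∂Ω`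
of hyperbolic diameter less than `ε₀` there is a Lipschitz test function `w` vanishing
on an open neighborhood of `D` with `0 < ∫_Ω w² dA < ∞` and
`∫_Ω |∇w|² dx dy < (1/4) ∫_Ω w² dA`; i.e. the first mixed eigenvalue is `< 1/4`. -/
theorem first_mixed_eigenvalue_small
    (Ω : Set (ℝ × ℝ)) (hΩH : Ω ⊆ H2) (hne : Ω.Nonempty) (hopen : IsOpen Ω)
    (hcomp : IsCompact (closure Ω)) (hclH : closure Ω ⊆ H2) :
    ∃ ε₀ : ℝ, 0 < ε₀ ∧
      ∀ D : Set (ℝ × ℝ), D ⊆ frontier Ω → D.Nonempty →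
        (∀ a ∈ D, ∀ b ∈ D, hypDist a b < ε₀) →
        ∃ w : ℝ × ℝ → ℝ, (∃ K : NNReal, LipschitzWith K w) ∧
          (∃ V : Set (ℝ × ℝ), IsOpen V ∧ D ⊆ V ∧ ∀ x ∈ V, w x = 0) ∧
          IntegrableOn (fun p : ℝ × ℝ => w p ^ 2 / p.2 ^ 2) Ω volume ∧
          0 < (∫ p in Ω, w p ^ 2 / p.2 ^ 2) ∧
          (∫ p in Ω, gradSq w p) < (1 / 4) * ∫ p in Ω, w p ^ 2 / p.2 ^ 2 := by
  -- extreme values of the height function on the compact closure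
  have hclne : (closure Ω).Nonempty := hne.closure
  obtain ⟨pC, hpCmem, hpCmax⟩ := hcomp.exists_isMaxOn hclne continuous_snd.continuousOn
  obtain ⟨pc, hpcmem, hpcmin⟩ := hcomp.exists_isMinOn hclne continuous_snd.continuousOn
  set C : ℝ := pC.2 with hCdef
  set c : ℝ := pc.2 with hcdef
  have hC0 : 0 < C := hclH hpCmem
  have hc0 : 0 < c := hclH hpcmem
  have hyC : ∀ p ∈ closure Ω, p.2 ≤ C := fun p hp => hpCmax hp
  have hyc : ∀ p ∈ closure Ω, c ≤ p.2 := fun p hp => hpcmin hp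
  -- volume constants
  have hvollt : volume Ω < ⊤ :=
    lt_of_le_of_lt (measure_mono subset_closure) hcomp.measure_lt_top
  have hvolfin : volume Ω ≠ ⊤ := hvollt.ne
  set m : ℝ := (volume Ω).toReal with hmdef
  have hm : 0 < m := ENNReal.toReal_pos (hopen.measure_pos volume hne).ne' hvolfin
  set R : ℝ := Real.sqrt (m / 8) with hRdef
  have hR0 : 0 < R := Real.sqrt_pos.2 (by positivity)
  have hR2 : R ^ 2 = m / 8 := Real.sq_sqrt (by positivity)
  set B : ℝ := m / (2 * C ^ 2) with hBdef
  have hB : 0 < B := by positivity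
  set lg : ℝ := Real.log 2 with hlgdef
  have hlg : 0 < lg := Real.log_pos one_lt_two
  set N : ℕ := ⌈512 / (B * lg ^ 2)⌉₊ + 1 with hNdef
  have hN1 : 1 ≤ N := Nat.le_add_left 1 _
  have hN0 : 0 < (N : ℝ) := by positivity
  have hNgt : 512 / (B * lg ^ 2) < (N : ℝ) := by
    have h1 : (512 / (B * lg ^ 2) : ℝ) ≤ (⌈512 / (B * lg ^ 2)⌉₊ : ℝ) := Nat.le_ceil _
    have h2 : ((⌈512 / (B * lg ^ 2)⌉₊ : ℕ) : ℝ) < (N : ℝ) := by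
      rw [hNdef]; push_cast; linarith
    linarith
  set r : ℝ := R / 2 ^ N with hrdef
  have hr0 : 0 < r := by positivity
  have hrR : r ≤ R := by
    have h2N : (1 : ℝ) ≤ 2 ^ N := one_le_pow₀ one_le_two
    rw [hrdef, div_le_iff₀ (by positivity)]
    nlinarith
  have hRr : (2 : ℝ) ^ N * r = R := by
    rw [hrdef]; field_simp
  set L : ℝ := (N : ℝ) * lg with hLdef
  have hL0 : 0 < L := by positivity
  have hlogRL : Real.log R - Real.log r = L := by
    rw [hrdef, Real.log_div hR0.ne' (by positivity), Real.log_pow]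
    ring
  have hEbound : (N : ℝ) * (128 / L ^ 2) < B / 4 := by
    have h512 : 512 < (N : ℝ) * (B * lg ^ 2) := (div_lt_iff₀ (by positivity)).1 hNgt
    have hL2 : (N : ℝ) * (128 / L ^ 2) = 128 / ((N : ℝ) * lg ^ 2) := by
      rw [hLdef]; field_simp
    rw [hL2, div_lt_div_iff₀ (by positivity) (by norm_num : (0:ℝ) < 4)]
    nlinarith
  set ε₀ : ℝ := Real.log (1 + r ^ 2 / (2 * C ^ 2)) with hε₀def
  have hε₀ : 0 < ε₀ := Real.log_pos (by
    have h : (0:ℝ) < r ^ 2 / (2 * C ^ 2) := by positivity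
    linarith)
  refine ⟨ε₀, hε₀, ?_⟩
  intro D hDfr hDne hdiam
  obtain ⟨q, hq⟩ := hDne
  have hqcl : q ∈ closure Ω := frontier_subset_closure (hDfr hq)
  -- small hyperbolic diameter forces small Euclidean diameter
  have hkey : ∀ a ∈ closure Ω, ∀ b ∈ closure Ω, hypDist a b < ε₀ → dist a b < r := by
    intro a ha b hb hab
    have ha2 : (0 : ℝ) < a.2 := hclH ha
    have hb2 : (0 : ℝ) < b.2 := hclH hb
    have haC : a.2 ≤ C := hyC a ha
    have hbC : b.2 ≤ C := hyC b hb
    set s : ℝ := ((a.1 - b.1) ^ 2 + (a.2 - b.2) ^ 2) / (2 * a.2 * b.2) with hsdef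
    have hs0 : 0 ≤ s := by positivity
    have hlog : Real.log (1 + s) ≤ hypDist a b := by
      unfold hypDist arcosh
      apply Real.log_le_log (by linarith)
      nlinarith [Real.sqrt_nonneg ((1 + s) ^ 2 - 1)]
    have h2 : Real.log (1 + s) < Real.log (1 + r ^ 2 / (2 * C ^ 2)) :=
      lt_of_le_of_lt hlog hab
    have h3 : s < r ^ 2 / (2 * C ^ 2) := by
      have := (Real.log_lt_log_iff (by linarith) (by positivity)).1 h2
      linarith
    have hprod : a.2 * b.2 ≤ C * C := mul_le_mul haC hbC hb2.le hC0.le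
    have h4 : (a.1 - b.1) ^ 2 + (a.2 - b.2) ^ 2 < r ^ 2 := by
      have hs' : (a.1 - b.1) ^ 2 + (a.2 - b.2) ^ 2 = s * (2 * a.2 * b.2) := by
        rw [hsdef]; field_simp
      rw [hs']
      calc s * (2 * a.2 * b.2) ≤ s * (2 * C * C) := by nlinarith
        _ < (r ^ 2 / (2 * C ^ 2)) * (2 * C * C) := by
            apply mul_lt_mul_of_pos_right h3 (by positivity)
        _ = r ^ 2 := by field_simp
    rw [Prod.dist_eq, Real.dist_eq, Real.dist_eq, max_lt_iff]
    constructor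
    · nlinarith [sq_abs (a.1 - b.1), abs_nonneg (a.1 - b.1), sq_nonneg (a.2 - b.2), hr0]
    · nlinarith [sq_abs (a.2 - b.2), abs_nonneg (a.2 - b.2), sq_nonneg (a.1 - b.1), hr0]
  -- the test function
  set w : ℝ × ℝ → ℝ := fun p => cutoff r L (dist p q) with hwdef
  have hwlipdist : ∀ x y : ℝ × ℝ, dist (w x) (w y) ≤ (1 / (r * L)) * dist x y := by
    intro x y
    rw [Real.dist_eq]
    calc |w x - w y| ≤ |dist x q - dist y q| / (r * L) :=
          cutoff_lip hr0 hL0 (le_max_right _ _) (le_max_right _ _)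
      _ ≤ dist x y / (r * L) :=
          div_le_div_of_nonneg_right (abs_dist_sub_le x y q) (by positivity)
      _ = (1 / (r * L)) * dist x y := by ring
  set K : NNReal := ⟨1 / (r * L), by positivity⟩ with hKdef
  have hlip : LipschitzWith K w :=
    LipschitzWith.of_dist_le_mul fun x y => hwlipdist x y
  -- basic pointwise facts
  have hw0 : ∀ p, 0 ≤ w p := fun p => cutoff_nonneg hr0 hL0 _
  have hw1 : ∀ p, w p ≤ 1 := fun p => cutoff_le_one _ _ _
  have hwone : ∀ p : ℝ × ℝ, R ≤ dist p q → w p = 1 :=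
    fun p hp => cutoff_one hr0 hL0 hrR hlogRL hp
  -- gradient bounds
  have hgradle : ∀ p, gradSq w p ≤ 2 * (K : ℝ) ^ 2 := fun p =>
    gradSq_le_of_lipschitzOn Filter.univ_mem (hlip.lipschitzOnWith (s := univ))
  have hgrad0a : ∀ p : ℝ × ℝ, dist p q < r → gradSq w p = 0 := by
    intro p hp
    apply gradSq_eq_zero_of_eventually_const (c := 0)
    filter_upwards [Metric.isOpen_ball.mem_nhds (Metric.mem_ball.2 hp)] with x hx
    exact cutoff_zero (le_of_lt (Metric.mem_ball.1 hx))
  have hgrad0b : ∀ p : ℝ × ℝ, R < dist p q → gradSq w p = 0 := by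
    intro p hp
    apply gradSq_eq_zero_of_eventually_const (c := 1)
    have hmem : p ∈ (Metric.closedBall q R)ᶜ := by
      simp only [mem_compl_iff, Metric.mem_closedBall, not_le]; exact hp
    filter_upwards [Metric.isClosed_closedBall.isOpen_compl.mem_nhds hmem] with x hx
    refine hwone x (le_of_lt ?_)
    simpa only [mem_compl_iff, Metric.mem_closedBall, not_le] using hx
  have hgradmid : ∀ p : ℝ × ℝ, r ≤ dist p q →
      gradSq w p ≤ 8 / (L ^ 2 * dist p q ^ 2) := by
    intro p hp
    set σ : ℝ := dist p q with hσdef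
    have hσ0 : 0 < σ := lt_of_lt_of_le hr0 hp
    have hK' : LipschitzOnWith ⟨2 / (σ * L), by positivity⟩ w (Metric.ball p (σ / 2)) := by
      apply LipschitzOnWith.of_dist_le_mul
      intro x hx y hy
      have hxq : σ / 2 ≤ dist x q := by
        have h1 : dist x p < σ / 2 := Metric.mem_ball.1 hx
        have h2 := dist_triangle p x q
        have h3 : dist p x = dist x p := dist_comm p x
        linarith
      have hyq : σ / 2 ≤ dist y q := by
        have h1 : dist y p < σ / 2 := Metric.mem_ball.1 hy
        have h2 := dist_triangle p y q
        have h3 : dist p y = dist y p := dist_comm p y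
        linarith
      rw [Real.dist_eq]
      calc |w x - w y| ≤ |dist x q - dist y q| / ((σ / 2) * L) :=
            cutoff_lip (by positivity) hL0 (le_max_of_le_left hxq) (le_max_of_le_left hyq)
        _ ≤ dist x y / ((σ / 2) * L) :=
            div_le_div_of_nonneg_right (abs_dist_sub_le x y q) (by positivity)
        _ = (2 / (σ * L)) * dist x y := by field_simp
    have hb := gradSq_le_of_lipschitzOn (Metric.ball_mem_nhds p (by positivity)) hK'
    calc gradSq w p ≤ 2 * (2 / (σ * L)) ^ 2 := hb
      _ = 8 / (L ^ 2 * σ ^ 2) := by field_simp; ring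
  -- measurability and integrability
  have hΩm : MeasurableSet Ω := hopen.measurableSet
  have hwcont : Continuous w := hlip.continuous
  have hmeasw2 : Measurable fun p : ℝ × ℝ => w p ^ 2 / p.2 ^ 2 :=
    (hwcont.measurable.pow_const 2).div (measurable_snd.pow_const 2)
  have hwint : IntegrableOn (fun p : ℝ × ℝ => w p ^ 2 / p.2 ^ 2) Ω volume := by
    apply Integrable.mono' (g := fun _ => 1 / c ^ 2)
      ((integrableOn_const_iff (C := 1 / c ^ 2)).2 (Or.inr hvollt)) hmeasw2.aestronglyMeasurable
    rw [ae_restrict_iff' hΩm]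
    refine Filter.Eventually.of_forall fun p hp => ?_
    have hp2 : c ≤ p.2 := hyc p (subset_closure hp)
    have hp0 : (0 : ℝ) < p.2 := hclH (subset_closure hp)
    rw [Real.norm_eq_abs, abs_of_nonneg (by positivity)]
    apply div_le_div₀ (by positivity) (by nlinarith [hw0 p, hw1 p]) (by positivity)
      (by nlinarith)
  have hmeasgrad : Measurable (gradSq w) := by
    unfold gradSq pdx pdy
    exact ((measurable_fderiv_apply_const ℝ w (((1:ℝ), (0:ℝ)) : ℝ × ℝ)).pow_const 2).add
      ((measurable_fderiv_apply_const ℝ w (((0:ℝ), (1:ℝ)) : ℝ × ℝ)).pow_const 2)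
  have hgradint : IntegrableOn (gradSq w) Ω volume := by
    apply Integrable.mono' (g := fun _ => 2 * (K : ℝ) ^ 2)
      ((integrableOn_const_iff (C := 2 * (K : ℝ) ^ 2)).2 (Or.inr hvollt)) hmeasgrad.aestronglyMeasurable
    refine Filter.Eventually.of_forall fun p => ?_
    rw [Real.norm_eq_abs, abs_of_nonneg (gradSq_nonneg w p)]
    exact hgradle p
  -- the dominating step function
  set A : ℕ → Set (ℝ × ℝ) :=
    fun k => Metric.closedBall q (2 ^ (k + 1) * r) \ Metric.ball q (2 ^ k * r) with hAdef
  have hAm : ∀ k, MeasurableSet (A k) :=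
    fun k => measurableSet_closedBall.diff Metric.isOpen_ball.measurableSet
  set φ : ℝ × ℝ → ℝ := fun p => ∑ k ∈ Finset.range N,
    (A k).indicator (fun _ => 8 / (L ^ 2 * ((2 : ℝ) ^ k * r) ^ 2)) p with hφdef
  have hφterm_int : ∀ k, Integrable
      ((A k).indicator (fun _ => 8 / (L ^ 2 * ((2 : ℝ) ^ k * r) ^ 2))) volume := by
    intro k
    rw [integrable_indicator_iff (hAm k)]
    exact (integrableOn_const_iff (C := 8 / (L ^ 2 * ((2 : ℝ) ^ k * r) ^ 2))).2 (Or.inr (lt_of_le_of_lt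
      (measure_mono diff_subset) measure_closedBall_lt_top))
  have hφint : Integrable φ volume := by
    rw [hφdef]
    exact integrable_finset_sum _ fun k _ => hφterm_int k
  have hφnonneg : ∀ p, 0 ≤ φ p := fun p =>
    Finset.sum_nonneg fun k _ => Set.indicator_nonneg (fun _ _ => by positivity) p
  have hdom : ∀ p, gradSq w p ≤ φ p := by
    intro p
    rcases lt_or_ge (dist p q) r with h | h
    · rw [hgrad0a p h]; exact hφnonneg p
    rcases le_or_gt (dist p q) R with h2 | h2
    · have hx1 : 1 ≤ dist p q / r := (one_le_div hr0).2 h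
      have hx2 : dist p q / r ≤ 2 ^ N := by
        rw [div_le_iff₀ hr0, ← hRr] at *
        exact h2
      obtain ⟨k, hkN, hk1, hk2⟩ := exists_dyadic N hN1 _ hx1 hx2
      have hk1' : 2 ^ k * r ≤ dist p q := by
        rw [← le_div_iff₀ hr0] at *; exact hk1
      have hk2' : dist p q ≤ 2 ^ (k + 1) * r := by
        rw [← div_le_iff₀ hr0] at *; exact hk2
      have hpA : p ∈ A k :=
        ⟨Metric.mem_closedBall.2 hk2', fun hc => absurd (Metric.mem_ball.1 hc) (not_lt.2 hk1')⟩
      have hd0 : 0 < dist p q := lt_of_lt_of_le hr0 h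
      calc gradSq w p ≤ 8 / (L ^ 2 * dist p q ^ 2) := hgradmid p h
        _ ≤ 8 / (L ^ 2 * ((2 : ℝ) ^ k * r) ^ 2) := by
            have h2k : (0 : ℝ) < 2 ^ k * r := by positivity
            gcongr
        _ ≤ φ p := by
            have hone : (A k).indicator (fun _ => 8 / (L ^ 2 * ((2 : ℝ) ^ k * r) ^ 2)) p
                = 8 / (L ^ 2 * ((2 : ℝ) ^ k * r) ^ 2) :=
              Set.indicator_of_mem hpA _
            rw [hφdef]
            dsimp only
            rw [← hone]
            exact Finset.single_le_sum
              (f := fun i => (A i).indicator (fun _ => 8 / (L ^ 2 * ((2 : ℝ) ^ i * r) ^ 2)) p)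
              (fun i _ => Set.indicator_nonneg (fun _ _ => by positivity) p)
              (Finset.mem_range.2 hkN)
    · rw [hgrad0b p h2]; exact hφnonneg p
  -- volume of closed balls in ℝ × ℝ
  have hvolball : ∀ ρ : ℝ, 0 ≤ ρ →
      (volume (Metric.closedBall q ρ)).toReal = 4 * ρ ^ 2 := by
    intro ρ hρ
    have h1 : Metric.closedBall q.1 ρ ×ˢ Metric.closedBall q.2 ρ = Metric.closedBall q ρ := by
      rw [closedBall_prod_same]
    rw [← h1, show (volume : Measure (ℝ × ℝ)) = (volume : Measure ℝ).prod volume from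
      Measure.volume_eq_prod ℝ ℝ]
    rw [Measure.prod_prod, Real.volume_closedBall, Real.volume_closedBall,
      ← ENNReal.ofReal_mul (by positivity), ENNReal.toReal_ofReal (by positivity)]
    ring
  -- energy integral bound
  have hEnergy : (∫ p in Ω, gradSq w p) < B / 4 := by
    have hφΩint : IntegrableOn φ Ω volume := hφint.integrableOn
    have hE1 : (∫ p in Ω, gradSq w p) ≤ ∫ p in Ω, φ p :=
      setIntegral_mono_on hgradint hφΩint hΩm fun p _ => hdom p
    have hE2 : (∫ p in Ω, φ p) ≤ ∫ p, φ p :=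
      setIntegral_le_integral hφint (Filter.Eventually.of_forall hφnonneg)
    have hE3 : (∫ p, φ p) ≤ (N : ℝ) * (128 / L ^ 2) := by
      rw [hφdef, integral_finset_sum _ fun k _ => hφterm_int k]
      have hterm : ∀ k ∈ Finset.range N,
          (∫ p, (A k).indicator (fun _ => 8 / (L ^ 2 * ((2 : ℝ) ^ k * r) ^ 2)) p) ≤
            128 / L ^ 2 := by
        intro k _
        rw [integral_indicator (hAm k), setIntegral_const, smul_eq_mul]
        have hvA : (volume (A k)).toReal ≤ 4 * ((2 : ℝ) ^ (k + 1) * r) ^ 2 := by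
          rw [← hvolball (2 ^ (k + 1) * r) (by positivity)]
          apply ENNReal.toReal_mono measure_closedBall_lt_top.ne
          exact measure_mono diff_subset
        have h2k : (0 : ℝ) < 2 ^ k := by positivity
        calc (volume (A k)).toReal * (8 / (L ^ 2 * ((2 : ℝ) ^ k * r) ^ 2))
            ≤ (4 * ((2 : ℝ) ^ (k + 1) * r) ^ 2) * (8 / (L ^ 2 * ((2 : ℝ) ^ k * r) ^ 2)) := by
              apply mul_le_mul_of_nonneg_right hvA (by positivity)
          _ = 128 / L ^ 2 := by
              rw [pow_succ]
              field_simp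
              ring
      calc (∑ k ∈ Finset.range N,
            ∫ p, (A k).indicator (fun _ => 8 / (L ^ 2 * ((2 : ℝ) ^ k * r) ^ 2)) p)
          ≤ ∑ _k ∈ Finset.range N, (128 / L ^ 2 : ℝ) := Finset.sum_le_sum hterm
        _ = (N : ℝ) * (128 / L ^ 2) := by
            rw [Finset.sum_const, Finset.card_range, nsmul_eq_mul]
    linarith
  -- mass lower bound
  set S : Set (ℝ × ℝ) := Ω \ Metric.closedBall q R with hSdef
  have hSsub : S ⊆ Ω := diff_subset
  have hSm : MeasurableSet S := hΩm.diff measurableSet_closedBall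
  have hvolS : m / 2 ≤ (volume S).toReal := by
    have hballvol : volume (Metric.closedBall q R) = ENNReal.ofReal (m / 2) := by
      have h1 : (volume (Metric.closedBall q R)).toReal = 4 * R ^ 2 := hvolball R hR0.le
      have h2 : volume (Metric.closedBall q R) ≠ ⊤ := measure_closedBall_lt_top.ne
      rw [← ENNReal.ofReal_toReal h2, h1, hR2]
      congr 1
      ring
    have h3 : ENNReal.ofReal (m / 2) ≤ volume S := by
      have h4 := le_measure_diff (μ := volume) (s₁ := Ω) (s₂ := Metric.closedBall q R)
      have h5 : volume Ω = ENNReal.ofReal m := (ENNReal.ofReal_toReal hvolfin).symm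
      rw [hballvol, h5] at h4
      calc ENNReal.ofReal (m / 2) = ENNReal.ofReal m - ENNReal.ofReal (m / 2) := by
            rw [← ENNReal.ofReal_sub m (by positivity)]
            congr 1
            ring
        _ ≤ volume S := h4
    have hfinS : volume S ≠ ⊤ := (lt_of_le_of_lt (measure_mono hSsub) hvollt).ne
    calc m / 2 = (ENNReal.ofReal (m / 2)).toReal := (ENNReal.toReal_ofReal (by positivity)).symm
      _ ≤ (volume S).toReal := ENNReal.toReal_mono hfinS h3
  have hmass : B ≤ ∫ p in Ω, w p ^ 2 / p.2 ^ 2 := by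
    have hM2 : (∫ _p in S, (1 / C ^ 2 : ℝ)) ≤ ∫ p in S, w p ^ 2 / p.2 ^ 2 := by
      apply setIntegral_mono_on ((integrableOn_const_iff (C := (1 / C ^ 2 : ℝ))).2
        (Or.inr (lt_of_le_of_lt (measure_mono hSsub) hvollt)))
        (hwint.mono_set hSsub) hSm
      intro p hp
      have hpΩ : p ∈ Ω := hp.1
      have hpd : R < dist p q := by
        have := hp.2
        simpa only [Metric.mem_closedBall, not_le] using this
      have hp2C : p.2 ≤ C := hyC p (subset_closure hpΩ)
      have hp20 : (0 : ℝ) < p.2 := hclH (subset_closure hpΩ)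
      rw [hwone p hpd.le, one_pow]
      apply one_div_le_one_div_of_le (by positivity)
      nlinarith
    have hM1 : (∫ p in S, w p ^ 2 / p.2 ^ 2) ≤ ∫ p in Ω, w p ^ 2 / p.2 ^ 2 := by
      apply setIntegral_mono_set hwint
      · exact Filter.Eventually.of_forall fun p => by positivity
      · exact HasSubset.Subset.eventuallyLE hSsub
    have hM3 : (∫ _p in S, (1 / C ^ 2 : ℝ)) = (volume S).toReal * (1 / C ^ 2) := by
      rw [setIntegral_const, smul_eq_mul]; rfl
    have hBle : B ≤ (volume S).toReal * (1 / C ^ 2) := by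
      calc B = (m / 2) * (1 / C ^ 2) := by rw [hBdef]; ring
        _ ≤ (volume S).toReal * (1 / C ^ 2) := by
            apply mul_le_mul_of_nonneg_right hvolS (by positivity)
    linarith
  refine ⟨w, ⟨K, hlip⟩, ⟨Metric.ball q r, Metric.isOpen_ball, ?_, ?_⟩, hwint, ?_, ?_⟩
  · intro b hb
    have := hkey q hqcl b (frontier_subset_closure (hDfr hb)) (hdiam q hq b hb)
    rw [Metric.mem_ball, dist_comm]
    exact this
  · intro x hx
    exact cutoff_zero (le_of_lt (Metric.mem_ball.1 hx))
  · exact lt_of_lt_of_le hB hmass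
  · calc (∫ p in Ω, gradSq w p) < B / 4 := hEnergy
      _ ≤ (1 / 4) * ∫ p in Ω, w p ^ 2 / p.2 ^ 2 := by linarith
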